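/- The generating function of the Catalan numbers satisfies ∑_{n≥0} C_n u^n = 2/(1 + √(1-4u)) for all real u with 0 ≤ u < 1/4. -/

import Mathlib

open Finset

lemma catalan_le_four_pow (n : ℕ) : catalan n ≤ 4 ^ n := by
  have h1 : catalan n ≤ n.centralBinom := by
    rw [catalan_eq_centralBinom_div]
    exact Nat.div_le_self _ _
  have h2 : n.centralBinom ≤ 4 ^ n := by
    have : n.centralBinom ≤ 2 ^ (2 * n) := by
      rw [Nat.centralBinom]
      calc (2 * n).choose n ≤ ∑ i ∈ range (2 * n + 1), (2 * n).choose i :=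
            Finset.single_le_sum (fun i _ => Nat.zero_le _)
              (by simp [Nat.lt_succ_iff]; omega)
        _ = 2 ^ (2 * n) := Nat.sum_range_choose (2 * n)
    calc n.centralBinom ≤ 2 ^ (2 * n) := this
      _ = 4 ^ n := by rw [pow_mul]; norm_num
  exact h1.trans h2

theorem catalan_generating_function (u : ℝ) (hu0 : 0 ≤ u) (hu : u < 1 / 4) :
    ∑' n : ℕ, (catalan n : ℝ) * u ^ n = 2 / (1 + Real.sqrt (1 - 4 * u)) := by
  set a : ℕ → ℝ := fun n => (catalan n : ℝ) * u ^ n with ha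
  have hD : (0:ℝ) < 1 - 4 * u := by linarith
  set s := Real.sqrt (1 - 4 * u) with hs
  have hs0 : 0 < s := Real.sqrt_pos.mpr hD
  have hs2 : s ^ 2 = 1 - 4 * u := Real.sq_sqrt hD.le
  have hs1 : s ≤ 1 := by
    nlinarith [hs2]
  set g : ℝ := 2 / (1 + s) with hg
  have h1s : (0:ℝ) < 1 + s := by linarith
  have hgeq : g = 1 + u * g ^ 2 := by
    rw [hg]
    field_simp
    nlinarith [hs2]
  have hg0 : 0 < g := by positivity
  -- nonnegativity of a
  have hapos : ∀ n, 0 ≤ a n := fun n => by positivity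
  -- summability
  have hsum : Summable a := by
    apply Summable.of_nonneg_of_le hapos (fun n => ?_) (summable_geometric_of_lt_one (by linarith) (by linarith : 4 * u < 1))
    show (catalan n : ℝ) * u ^ n ≤ (4 * u) ^ n
    rw [mul_pow]
    apply mul_le_mul_of_nonneg_right _ (pow_nonneg hu0 n)
    calc ((catalan n : ℝ)) ≤ ((4 ^ n : ℕ) : ℝ) := by exact_mod_cast catalan_le_four_pow n
      _ = 4 ^ n := by push_cast; ring
  set f : ℝ := ∑' n, a n with hf
  -- catalan recurrence on a
  have hrec : ∀ n, a (n + 1) = u * ∑ kl ∈ Finset.HasAntidiagonal.antidiagonal n, a kl.1 * a kl.2 := by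
    intro n
    have := catalan_succ' n
    simp only [ha]
    rw [this]
    push_cast
    rw [Finset.sum_mul, Finset.mul_sum]
    apply Finset.sum_congr rfl
    intro kl hkl
    have : kl.1 + kl.2 = n := Finset.HasAntidiagonal.mem_antidiagonal.mp hkl
    rw [← this]
    ring
  -- partial sums bounded by g
  have hpart : ∀ N, ∑ n ∈ range N, a n ≤ g := by
    intro N
    induction N with
    | zero => simp [hg0.le]
    | succ N ih =>
      have key : ∑ n ∈ range (N + 1), a n ≤ 1 + u * (∑ n ∈ range N, a n) ^ 2 := by
        rw [Finset.sum_range_succ' a N]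
        simp only [ha]
        have ha0 : a 0 = 1 := by simp [ha]
        have : ∑ i ∈ range N, a (i + 1) ≤ u * (∑ n ∈ range N, a n) ^ 2 := by
          have h1 : ∑ i ∈ range N, a (i + 1)
              = u * ∑ i ∈ range N, ∑ kl ∈ Finset.HasAntidiagonal.antidiagonal i, a kl.1 * a kl.2 := by
            rw [Finset.mul_sum]; exact Finset.sum_congr rfl fun i _ => hrec i
          rw [h1]
          apply mul_le_mul_of_nonneg_left _ hu0
          have h2 : ∑ i ∈ range N, ∑ kl ∈ Finset.HasAntidiagonal.antidiagonal i, a kl.1 * a kl.2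
              = ∑ kl ∈ (range N).biUnion Finset.HasAntidiagonal.antidiagonal, a kl.1 * a kl.2 := by
            rw [Finset.sum_biUnion]
            intro x _ y _ hxy
            apply Finset.disjoint_left.mpr
            intro p hpx hpy
            exact hxy ((Finset.HasAntidiagonal.mem_antidiagonal.mp hpx).symm.trans (Finset.HasAntidiagonal.mem_antidiagonal.mp hpy))
          rw [h2, sq, Finset.sum_mul_sum, ← Finset.sum_product']
          apply Finset.sum_le_sum_of_subset_of_nonneg
          · intro p hp
            simp only [Finset.mem_biUnion] at hp
            obtain ⟨i, hi, hpi⟩ := hp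
            have := Finset.HasAntidiagonal.mem_antidiagonal.mp hpi
            simp only [Finset.mem_product, Finset.mem_range] at *
            omega
          · intro p _ _
            exact mul_nonneg (hapos _) (hapos _)
        simp only [ha] at this ha0 ⊢
        rw [ha0]
        linarith
      have hP0 : 0 ≤ ∑ n ∈ range N, a n := Finset.sum_nonneg fun n _ => hapos n
      calc ∑ n ∈ range (N + 1), a n ≤ 1 + u * (∑ n ∈ range N, a n) ^ 2 := key
        _ ≤ 1 + u * g ^ 2 := by
              have := pow_le_pow_left₀ hP0 ih 2
              nlinarith
        _ = g := hgeq.symm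
  have hfg : f ≤ g := hsum.tsum_le_of_sum_range_le hpart
  have hf0 : 0 ≤ f := tsum_nonneg hapos
  -- functional equation for f
  have hfeq : f = 1 + u * f ^ 2 := by
    have hnorm : Summable fun n => ‖a n‖ := by
      simpa [Real.norm_of_nonneg (hapos _)] using hsum
    have hc : f * f = ∑' n, ∑ kl ∈ Finset.HasAntidiagonal.antidiagonal n, a kl.1 * a kl.2 :=
      tsum_mul_tsum_eq_tsum_sum_antidiagonal_of_summable_norm hnorm hnorm
    have h2 : ∑' n, a (n + 1) = u * (f * f) := by
      rw [hc, ← tsum_mul_left]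
      exact tsum_congr hrec
    have h3 : f = a 0 + ∑' n, a (n + 1) := by
      rw [hf, hsum.tsum_eq_zero_add]
    have ha0 : a 0 = 1 := by simp [ha]
    conv_lhs => rw [h3]
    rw [h2, ha0]
    ring
  -- conclude f = g
  have hfactor : (f - g) * (1 - u * (f + g)) = 0 := by nlinarith [hfeq, hgeq]
  have hug : u * g < 1 / 2 := by
    have : 2 * (u * g) = 1 - s := by
      rw [hg]
      field_simp
      nlinarith [hs2]
    linarith
  have hne : 1 - u * (f + g) > 0 := by nlinarith [mul_le_mul_of_nonneg_left hfg hu0]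
  have : f = g := by
    rcases mul_eq_zero.mp hfactor with h | h
    · linarith
    · linarith
  simpa [hf, hg, ha, hs] using this
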